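/- Let $U$ be a principal Galois $\Gamma$-order. Then $\Gamma$ is a maximal commutative subalgebra of $U$: if $X \in U$ commutes with every element of $\Gamma$, then $X \in \Gamma$. -/

import Mathlib

noncomputable section

/-- Left multiplication by `l` as an additive endomorphism of `L`. -/
def mulL {L : Type*} [Field L] (l : L) : AddMonoid.End L := AddMonoidHom.mulLeft l

/-- A ring automorphism viewed as an additive endomorphism. -/
def autEnd {L : Type*} [Field L] (μ : L ≃+* L) : AddMonoid.End L :=
  (μ : L →+* L).toAddMonoidHom

/-- The subring of `L` of elements fixed by every member of `W`. -/
def fixedSubring {L : Type*} [Field L] (W : Subgroup (L ≃+* L)) : Subring L where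
  carrier := {x | ∀ w ∈ W, w x = x}
  mul_mem' := by intro a b ha hb; intro w hw; simp [map_mul, ha w hw, hb w hw]
  one_mem' := by intro w hw; simp
  add_mem' := by intro a b ha hb; intro w hw; simp [map_add, ha w hw, hb w hw]
  zero_mem' := by intro w hw; simp
  neg_mem' := by intro a ha w hw; simp [map_neg, ha w hw]

/-- A Galois ring setting `(Λ, 𝓜, W)`: a Noetherian integral domain `Λ` realized as a
subring of its fraction field `L`, a submonoid `𝓜` of automorphisms of `L` restricting
to automorphisms of `Λ`, and a finite group `W` of automorphisms of `Λ` acting on `𝓜`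
by conjugation with finitely many orbits, with `𝓜` separating
(`𝓜 𝓜⁻¹ ∩ W = {1}`). -/
structure GaloisSetting (L : Type*) [Field L] where
  Λ : Subring L
  noeth : IsNoetherianRing Λ
  frac : ∀ x : L, ∃ a b : Λ, (b : L) ≠ 0 ∧ x = a / b
  M : Submonoid (L ≃+* L)
  W : Subgroup (L ≃+* L)
  finW : Finite W
  hM : ∀ μ ∈ M, (∀ x ∈ Λ, μ x ∈ Λ) ∧ ∀ x ∈ Λ, μ.symm x ∈ Λ
  hW : ∀ w ∈ W, ∀ x ∈ Λ, w x ∈ Λ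
  norm : ∀ w ∈ W, ∀ μ ∈ M, w * μ * w⁻¹ ∈ M
  orbits : ∃ T : Finset (L ≃+* L), ↑T ⊆ (M : Set (L ≃+* L)) ∧
    ∀ μ ∈ M, ∃ ν ∈ T, ∃ w ∈ W, μ = w * ν * w⁻¹
  separating : ∀ μ ∈ M, ∀ ν ∈ M, μ * ν⁻¹ ∈ W → μ = ν

namespace GaloisSetting

variable {L : Type*} [Field L] (S : GaloisSetting L)

/-- `Γ = Λᵂ`, the invariants of `Λ` under `W`. -/
def Γ : Subring L := S.Λ ⊓ fixedSubring S.W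

/-- `K = Lᵂ`, the invariants of `L` under `W` (the fraction field of `Γ`). -/
def K : Subring L := fixedSubring S.W

/-- The skew monoid ring `𝓛 = L * 𝓜`, realized concretely as the subring of additive
endomorphisms of `L` generated by left multiplications by elements of `L` and by the
automorphisms in `𝓜`; its elements are exactly the finite sums `Σ l_μ μ`. -/
def skewL : Subring (AddMonoid.End L) :=
  Subring.closure ({f | ∃ l : L, f = mulL l} ∪ {f | ∃ μ ∈ S.M, f = autEnd μ})

/-- `𝓚 = 𝓛ᵂ`: the elements of the skew monoid ring fixed by conjugation by `W`. -/
def invK : Set (AddMonoid.End L) :=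
  {X | X ∈ S.skewL ∧ ∀ w : L ≃+* L, w ∈ S.W → autEnd w * X * autEnd w.symm = X}

/-- `U` is a Galois `Γ`-ring in `𝓚 = (L * 𝓜)ᵂ`: `Λ` is a Noetherian `Γ`-module,
`Γ ⊆ U ⊆ 𝓚`, and `K U = 𝓚`. -/
structure IsGaloisRing (U : Subring (AddMonoid.End L)) : Prop where
  lambdaNoeth : ∀ N : AddSubgroup L, (N : Set L) ⊆ S.Λ →
    (∀ γ ∈ S.Γ, ∀ x ∈ N, γ * x ∈ N) →
    ∃ s : Finset L, ↑s ⊆ (N : Set L) ∧ ∀ x ∈ N,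
      x ∈ AddSubgroup.closure {y | ∃ γ ∈ S.Γ, ∃ a ∈ (s : Set L), y = γ * a}
  gammaSub : ∀ γ ∈ S.Γ, mulL γ ∈ U
  subInvK : ∀ X ∈ U, X ∈ S.invK
  KU : ∀ X ∈ S.invK,
    X ∈ AddSubgroup.closure {f | ∃ k ∈ S.K, ∃ u ∈ U, f = mulL k * u}

/-- `U` is a principal Galois `Γ`-order: a Galois `Γ`-ring whose elements, viewed as
operators on `L`, preserve `Γ`. -/
structure IsPrincipalGaloisOrder (U : Subring (AddMonoid.End L))
    extends GaloisSetting.IsGaloisRing S U : Prop where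
  princ : ∀ X ∈ U, ∀ γ : L, γ ∈ S.Γ → X γ ∈ S.Γ

end GaloisSetting

namespace PGOaux

variable {L : Type*} [Field L]

@[simp] lemma mulL_apply (l x : L) : mulL l x = l * x := rfl
@[simp] lemma autEnd_apply (μ : L ≃+* L) (x : L) : autEnd μ x = μ x := rfl
@[simp] lemma end_mul_apply (f g : AddMonoid.End L) (x : L) : (f * g) x = f (g x) := rfl
@[simp] lemma end_add_apply (f g : AddMonoid.End L) (x : L) : (f + g) x = f x + g x := rfl
@[simp] lemma end_one_apply (x : L) : (1 : AddMonoid.End L) x = x := rfl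
@[simp] lemma equiv_one_apply (x : L) : (1 : L ≃+* L) x = x := rfl
@[simp] lemma equiv_mul_apply (μ ν : L ≃+* L) (x : L) : (μ * ν) x = μ (ν x) := rfl

lemma mulL_zero : mulL (0 : L) = 0 := by refine DFunLike.ext _ _ fun x => ?_; simp

lemma mulL_add (a b : L) : mulL (a + b) = mulL a + mulL b := by
  refine DFunLike.ext _ _ fun x => ?_; simp [add_mul]

lemma mulL_sub (a b : L) : mulL (a - b) = mulL a - mulL b := by
  refine DFunLike.ext _ _ fun x => ?_
  show (a - b) * x = mulL a x - mulL b x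
  simp [sub_mul]

/-- `l ↦ mulL l * autEnd μ` as an additive hom. -/
def ΦAux (μ : L ≃+* L) : L →+ AddMonoid.End L where
  toFun l := mulL l * autEnd μ
  map_zero' := by refine DFunLike.ext _ _ fun x => ?_; simp
  map_add' a b := by refine DFunLike.ext _ _ fun x => ?_; simp [add_mul]

/-- The normal-form map `Σ l_μ μ`. -/
def Φ : ((L ≃+* L) →₀ L) →+ AddMonoid.End L := Finsupp.liftAddHom ΦAux

lemma Φ_apply (c : (L ≃+* L) →₀ L) : Φ c = c.sum fun μ a => mulL a * autEnd μ :=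
  Finsupp.liftAddHom_apply _ _

lemma Φ_single (μ : L ≃+* L) (a : L) : Φ (Finsupp.single μ a) = mulL a * autEnd μ :=
  Finsupp.liftAddHom_apply_single _ _ _

lemma mulL_autEnd_mul (a b : L) (μ ν : L ≃+* L) :
    (mulL a * autEnd μ) * (mulL b * autEnd ν) = mulL (a * μ b) * autEnd (μ * ν) := by
  refine DFunLike.ext _ _ fun x => ?_; simp [mul_assoc, map_mul]

lemma mulL_autEnd_mulL (a γ : L) (μ : L ≃+* L) :
    (mulL a * autEnd μ) * mulL γ = mulL (a * μ γ) * autEnd μ := by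
  refine DFunLike.ext _ _ fun x => ?_; simp [mul_assoc, map_mul]

lemma mulL_mulL_autEnd (a γ : L) (μ : L ≃+* L) :
    mulL γ * (mulL a * autEnd μ) = mulL (γ * a) * autEnd μ := by
  refine DFunLike.ext _ _ fun x => ?_; simp [mul_assoc]

/-- Dedekind independence: `Φ` is injective. -/
lemma Φ_injective (c : (L ≃+* L) →₀ L) (h : Φ c = 0) : c = 0 := by
  have hinj : Function.Injective (fun μ : L ≃+* L => ((μ : L →+* L) : L →* L)) := by
    intro μ ν hμν
    ext x
    exact DFunLike.congr_fun hμν x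
  have li : LinearIndependent L (fun μ : L ≃+* L => (⇑μ : L → L)) :=
    (linearIndependent_monoidHom L L).comp _ hinj
  refine linearIndependent_iff.mp li c ?_
  rw [Finsupp.linearCombination_apply]
  funext x
  have h0 : (Φ c) x = 0 := by rw [h]; rfl
  rw [Φ_apply, Finsupp.sum] at h0
  have hs : ∀ (s : Finset (L ≃+* L)) (f : (L ≃+* L) → AddMonoid.End L),
      (∑ i ∈ s, f i) x = ∑ i ∈ s, f i x := fun s f => by
    classical
    induction s using Finset.induction_on with
    | empty => rfl
    | insert a s ha ih => rw [Finset.sum_insert ha, Finset.sum_insert ha, end_add_apply, ih]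
  rw [hs] at h0
  rw [Finsupp.sum, Finset.sum_apply]
  simpa [smul_eq_mul] using h0

/-- Elements of the skew group ring have a normal form. -/
lemma skew_rep (M : Submonoid (L ≃+* L)) (X : AddMonoid.End L)
    (hX : X ∈ Subring.closure ({f | ∃ l : L, f = mulL l} ∪ {f | ∃ μ ∈ M, f = autEnd μ})) :
    ∃ c : (L ≃+* L) →₀ L, (∀ μ ∈ c.support, μ ∈ M) ∧ X = Φ c := by
  classical
  induction hX using Subring.closure_induction with
  | mem f hf =>
    rcases hf with ⟨l, rfl⟩ | ⟨μ, hμ, rfl⟩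
    · refine ⟨Finsupp.single 1 l, ?_, ?_⟩
      · intro μ hμ
        have := Finsupp.support_single_subset hμ
        simp only [Finset.mem_singleton] at this
        exact this ▸ M.one_mem
      · rw [Φ_single]
        refine DFunLike.ext _ _ fun x => ?_; simp
    · refine ⟨Finsupp.single μ 1, ?_, ?_⟩
      · intro ν hν
        have := Finsupp.support_single_subset hν
        simp only [Finset.mem_singleton] at this
        exact this ▸ hμ
      · rw [Φ_single]
        refine DFunLike.ext _ _ fun x => ?_; simp
  | zero => exact ⟨0, by simp, by simp⟩
  | one =>
    refine ⟨Finsupp.single 1 1, ?_, ?_⟩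
    · intro μ hμ
      have := Finsupp.support_single_subset hμ
      simp only [Finset.mem_singleton] at this
      exact this ▸ M.one_mem
    · rw [Φ_single]; refine DFunLike.ext _ _ fun x => ?_; simp
  | add f g _ _ hf hg =>
    obtain ⟨c, hc, rfl⟩ := hf
    obtain ⟨d, hd, rfl⟩ := hg
    refine ⟨c + d, ?_, (map_add Φ c d).symm⟩
    intro μ hμ
    rcases Finset.mem_union.mp (Finsupp.support_add hμ) with h | h
    · exact hc μ h
    · exact hd μ h
  | neg f _ hf =>
    obtain ⟨c, hc, rfl⟩ := hf
    exact ⟨-c, by simpa using hc, (map_neg Φ c).symm⟩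
  | mul f g _ _ hf hg =>
    obtain ⟨c, hc, rfl⟩ := hf
    obtain ⟨d, hd, rfl⟩ := hg
    refine ⟨c.sum fun μ a => d.sum fun ν b => Finsupp.single (μ * ν) (a * μ b), ?_, ?_⟩
    · intro ρ hρ
      have h1 := Finsupp.support_sum hρ
      rw [Finset.mem_biUnion] at h1
      obtain ⟨μ, hμ, h2⟩ := h1
      have h3 := Finsupp.support_sum h2
      rw [Finset.mem_biUnion] at h3
      obtain ⟨ν, hν, h4⟩ := h3
      have := Finsupp.support_single_subset h4
      simp only [Finset.mem_singleton] at this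
      exact this ▸ M.mul_mem (hc μ hμ) (hd ν hν)
    · rw [map_finsuppSum]
      rw [Φ_apply c, Finsupp.sum, Finsupp.sum, Finset.sum_mul]
      refine Finset.sum_congr rfl fun μ hμ => ?_
      rw [map_finsuppSum]
      rw [Φ_apply d, Finsupp.sum, Finsupp.sum, Finset.mul_sum]
      refine Finset.sum_congr rfl fun ν hν => ?_
      rw [Φ_single, mulL_autEnd_mul]

end PGOaux

section Part2

variable {L : Type*} [Field L]

open PGOaux GaloisSetting

/-- Every `W`-invariant element of `L` is a ratio of elements of `Γ`. -/
lemma K_frac (S : GaloisSetting L) (x : L) (hx : ∀ w ∈ S.W, w x = x) :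
    ∃ a b : L, a ∈ S.Γ ∧ b ∈ S.Γ ∧ b ≠ 0 ∧ x = a / b := by
  classical
  haveI : Finite S.W := S.finW
  haveI : Fintype S.W := Fintype.ofFinite _
  obtain ⟨a, b, hb0, hxab⟩ := S.frac x
  set b' : L := ∏ w : S.W, (w : L ≃+* L) b with hb'def
  have hb'Λ : b' ∈ S.Λ := Subring.prod_mem _ fun w _ => S.hW w w.2 b b.2
  have hb'fix : ∀ v ∈ S.W, v b' = b' := by
    intro v hv
    rw [hb'def, map_prod]
    calc ∏ w : S.W, v ((w : L ≃+* L) b)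
        = ∏ w : S.W, (((⟨v, hv⟩ : S.W) * w : S.W) : L ≃+* L) b :=
          Finset.prod_congr rfl fun w _ => rfl
      _ = ∏ w : S.W, (w : L ≃+* L) b :=
          Equiv.prod_comp (Equiv.mulLeft (⟨v, hv⟩ : S.W)) (fun w : S.W => (w : L ≃+* L) b)
  have hb'0 : b' ≠ 0 := by
    rw [hb'def]
    refine Finset.prod_ne_zero_iff.mpr fun w _ => ?_
    intro h
    apply hb0
    have := congrArg (w : L ≃+* L).symm h
    simpa using this
  have key : x * b' = (a : L) * ∏ w ∈ Finset.univ.erase (1 : S.W), (w : L ≃+* L) b := by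
    rw [hb'def, ← Finset.mul_prod_erase Finset.univ _ (Finset.mem_univ (1 : S.W))]
    have h1 : ((1 : S.W) : L ≃+* L) b = (b : L) := rfl
    rw [h1, hxab, ← mul_assoc, div_mul_cancel₀ _ hb0]
  have ha'Λ : x * b' ∈ S.Λ := by
    rw [key]
    exact S.Λ.mul_mem a.2 (Subring.prod_mem _ fun w _ => S.hW w w.2 b b.2)
  have ha'fix : ∀ v ∈ S.W, v (x * b') = x * b' := by
    intro v hv
    rw [map_mul, hx v hv, hb'fix v hv]
  refine ⟨x * b', b', Subring.mem_inf.mpr ⟨ha'Λ, ha'fix⟩,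
    Subring.mem_inf.mpr ⟨hb'Λ, hb'fix⟩, hb'0, ?_⟩
  rw [mul_div_cancel_right₀ _ hb'0]

/-- Artin: an automorphism fixing `Γ` pointwise lies in `W`. -/
lemma fix_gamma_mem_W (S : GaloisSetting L) (μ : L ≃+* L)
    (hμ : ∀ γ ∈ S.Γ, μ γ = γ) : μ ∈ S.W := by
  haveI : Finite S.W := S.finW
  have hK : ∀ x : L, (∀ w ∈ S.W, w x = x) → μ x = x := by
    intro x hx
    obtain ⟨a, b, ha, hb, hb0, rfl⟩ := K_frac S x hx
    rw [map_div₀, hμ a ha, hμ b hb]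
  letI : MulSemiringAction S.W L :=
    { smul := fun w x => (w : L ≃+* L) x
      one_smul := fun x => rfl
      mul_smul := fun g h x => rfl
      smul_zero := fun g => map_zero _
      smul_add := fun g => map_add _
      smul_one := fun g => map_one _
      smul_mul := fun g => map_mul _ }
  haveI : FaithfulSMul S.W L :=
    ⟨fun {w v} h => Subtype.ext (RingEquiv.ext fun x => h x)⟩
  let φ : L →ₐ[FixedPoints.subfield S.W L] L :=
    { toRingHom := (μ : L →+* L)
      commutes' := fun s => hK s.1 (fun w hw => s.2 ⟨w, hw⟩) }
  obtain ⟨w, hw⟩ := (FixedPoints.toAlgHom_bijective S.W L).surjective φ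
  have hμw : μ = (w : L ≃+* L) := by
    ext x
    exact (AlgHom.ext_iff.mp hw x).symm
  rw [hμw]
  exact w.2

end Part2

open GaloisSetting in
/-- Let `U` be a principal Galois `Γ`-order.  Then `Γ` is a maximal
commutative subalgebra of `U`: any `X ∈ U` commuting with every element of `Γ`
(embedded in `U` as left-multiplication operators) lies in `Γ`. -/
theorem principalGaloisOrder_gamma_maximal_commutative {L : Type*} [Field L]
    (S : GaloisSetting L) (U : Subring (AddMonoid.End L))
    (hU : S.IsPrincipalGaloisOrder U) :
    ∀ X ∈ U, (∀ γ ∈ S.Γ, X * mulL γ = mulL γ * X) → ∃ γ ∈ S.Γ, X = mulL γ := by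
  classical
  intro X hX hcomm
  obtain ⟨c, hcM, rfl⟩ := PGOaux.skew_rep S.M X (hU.subInvK X hX).1
  have hfix : ∀ μ ∈ c.support, ∀ γ ∈ S.Γ, μ γ = γ := by
    intro μ hμ γ hγ
    have he : PGOaux.Φ (c.sum fun ν a => Finsupp.single ν (a * ν γ - γ * a)) = 0 := by
      rw [map_finsuppSum]
      have h1 : (PGOaux.Φ c) * mulL γ
          = c.sum fun ν a => mulL (a * ν γ) * autEnd ν := by
        rw [PGOaux.Φ_apply, Finsupp.sum, Finsupp.sum, Finset.sum_mul]
        exact Finset.sum_congr rfl fun ν _ => PGOaux.mulL_autEnd_mulL _ _ _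
      have h2 : mulL γ * (PGOaux.Φ c)
          = c.sum fun ν a => mulL (γ * a) * autEnd ν := by
        rw [PGOaux.Φ_apply, Finsupp.sum, Finsupp.sum, Finset.mul_sum]
        exact Finset.sum_congr rfl fun ν _ => PGOaux.mulL_mulL_autEnd _ _ _
      have h3 := hcomm γ hγ
      calc (c.sum fun ν a => PGOaux.Φ (Finsupp.single ν (a * ν γ - γ * a)))
          = c.sum fun ν a =>
              (mulL (a * ν γ) * autEnd ν - mulL (γ * a) * autEnd ν) := by
            refine Finset.sum_congr rfl fun ν hν => ?_
            show PGOaux.Φ (Finsupp.single ν (c ν * ν γ - γ * c ν)) = _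
            rw [PGOaux.Φ_single, PGOaux.mulL_sub, sub_mul]
        _ = (PGOaux.Φ c * mulL γ) - (mulL γ * PGOaux.Φ c) := by
            rw [h1, h2, Finsupp.sum, Finsupp.sum, Finsupp.sum, Finset.sum_sub_distrib]
        _ = 0 := by rw [h3, sub_self]
    have he0 := PGOaux.Φ_injective _ he
    have heval : (c.sum fun ν a => Finsupp.single ν (a * ν γ - γ * a)) μ
        = c μ * μ γ - γ * c μ := by
      rw [Finsupp.sum_apply, Finsupp.sum]
      rw [Finset.sum_eq_single_of_mem μ hμ]
      · rw [Finsupp.single_eq_same]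
      · intro ν _ hνμ
        rw [Finsupp.single_eq_of_ne' hνμ]
    rw [he0, Finsupp.zero_apply] at heval
    have hcμ : c μ ≠ 0 := Finsupp.mem_support_iff.mp hμ
    have h4 : c μ * μ γ = γ * c μ := sub_eq_zero.mp heval.symm
    have h5 : c μ * μ γ = c μ * γ := by rw [h4, mul_comm]
    exact mul_left_cancel₀ hcμ h5
  have hsupp : c.support ⊆ {1} := by
    intro μ hμ
    have hμM := hcM μ hμ
    have hμW := fix_gamma_mem_W S μ (hfix μ hμ)
    have h1 : μ = 1 := S.separating μ hμM 1 S.M.one_mem (by simpa using hμW)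
    simp [h1]
  have hc1 : c = Finsupp.single 1 (c 1) := Finsupp.support_subset_singleton.mp hsupp
  have hXform : PGOaux.Φ c = mulL (c 1) := by
    rw [hc1, PGOaux.Φ_single]
    refine DFunLike.ext _ _ fun x => ?_
    simp
  refine ⟨c 1, ?_, hXform⟩
  have h1Γ : (1 : L) ∈ S.Γ :=
    Subring.mem_inf.mpr ⟨S.Λ.one_mem, fun w _ => map_one w⟩
  have hp := hU.princ _ hX 1 h1Γ
  rw [hXform] at hp
  simpa using hp
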